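/- Let x_1, ..., x_n be distinct real numbers, let r be a real number, and set p_i = e^{2 x_i} for each i. Then K_r(p_1,...,p_n) = Δ K̃_r Δ, where Δ = diag(e^{(r−1)x_1}, ..., e^{(r−1)x_n}) and K̃_r is the n×n matrix with (i,j) entry cosh(r(x_i−x_j))/cosh(x_i−x_j); consequently the inertia of K_r(p_1,...,p_n) equals the inertia of K̃_r. -/

import Mathlib

open Matrix

section Aux

open Module Real

variable {n : ℕ}

private lemma scalar_key (a b r : ℝ) :
    (exp (2*a) ^ r + exp (2*b) ^ r) / (exp (2*a) + exp (2*b)) =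
      exp ((r-1)*a) * (cosh (r*(a-b)) / cosh (a-b)) * exp ((r-1)*b) := by
  rw [← Real.exp_mul, ← Real.exp_mul, Real.cosh_eq, Real.cosh_eq]
  field_simp
  ring_nf
  simp only [← Real.exp_add]
  ring_nf

/-- coordinate subspace supported on `S` -/
private noncomputable def suppSub (S : Set (Fin n)) : Submodule ℝ (Fin n → ℝ) :=
  Submodule.span ℝ (Set.range fun i : S => Pi.single (i : Fin n) (1:ℝ))

private lemma suppSub_finrank (S : Set (Fin n)) : finrank ℝ (suppSub S) = S.ncard := by
  classical
  have hli : LinearIndependent ℝ (fun i : S => (Pi.single (i : Fin n) (1:ℝ) : Fin n → ℝ)) := by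
    have h2 := (Pi.basisFun ℝ (Fin n)).linearIndependent.comp
      (Subtype.val : S → Fin n) Subtype.val_injective
    have : (⇑(Pi.basisFun ℝ (Fin n)) ∘ (Subtype.val : S → Fin n)) =
        fun i : S => (Pi.single (i : Fin n) (1:ℝ) : Fin n → ℝ) := by
      funext i; simp
    rwa [this] at h2
  rw [suppSub, finrank_span_eq_card hli]
  rw [Set.ncard_eq_toFinset_card', Set.toFinset_card]

private lemma suppSub_apply_eq_zero {S : Set (Fin n)} {w : Fin n → ℝ} (hw : w ∈ suppSub S)
    {j : Fin n} (hj : j ∉ S) : w j = 0 := by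
  induction hw using Submodule.span_induction with
  | mem v hv =>
    obtain ⟨i, rfl⟩ := hv
    have : (i : Fin n) ≠ j := by rintro rfl; exact hj i.2
    exact Pi.single_eq_of_ne (Ne.symm this) 1
  | zero => rfl
  | add _ _ _ _ h1 h2 => simp [h1, h2]
  | smul c _ _ h => simp [h]

private lemma quad_form_eigen {A : Matrix (Fin n) (Fin n) ℝ} (hA : A.IsHermitian)
    (w : Fin n → ℝ) :
    ((hA.eigenvectorUnitary : Matrix (Fin n) (Fin n) ℝ) *ᵥ w) ⬝ᵥ
      (A *ᵥ ((hA.eigenvectorUnitary : Matrix (Fin n) (Fin n) ℝ) *ᵥ w)) =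
    ∑ i, hA.eigenvalues i * w i ^ 2 := by
  set U := (hA.eigenvectorUnitary : Matrix (Fin n) (Fin n) ℝ) with hU
  have hAU : A * U = U * Matrix.diagonal hA.eigenvalues := by
    conv_lhs => rw [hA.spectral_theorem, Unitary.conjStarAlgAut_apply]
    rw [mul_assoc, mul_assoc]
    rw [show star U * U = 1 from Unitary.coe_star_mul_self hA.eigenvectorUnitary]
    simp [Function.comp, hU]
  have h1 : A *ᵥ (U *ᵥ w) = U *ᵥ (Matrix.diagonal hA.eigenvalues *ᵥ w) := by
    rw [mulVec_mulVec, mulVec_mulVec, hAU]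
  rw [h1, dotProduct_mulVec, ← vecMul_transpose]
  have hUU : Uᵀ * U = 1 := by
    have := Unitary.coe_star_mul_self hA.eigenvectorUnitary
    rwa [star_eq_conjTranspose, conjTranspose_eq_transpose_of_trivial] at this
  rw [vecMul_vecMul, hUU, vecMul_one]
  simp only [dotProduct, mulVec_diagonal]
  exact Finset.sum_congr rfl fun i _ => by ring

private lemma unitary_mulVecLin_injective {A : Matrix (Fin n) (Fin n) ℝ} (hA : A.IsHermitian) :
    Function.Injective (mulVecLin (hA.eigenvectorUnitary : Matrix (Fin n) (Fin n) ℝ)) := by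
  intro v w h
  have h2 := congrArg (fun z => star (hA.eigenvectorUnitary : Matrix (Fin n) (Fin n) ℝ) *ᵥ z) h
  simpa [mulVec_mulVec, Unitary.coe_star_mul_self hA.eigenvectorUnitary] using h2

private lemma exists_posOn {A : Matrix (Fin n) (Fin n) ℝ} (hA : A.IsHermitian) :
    ∃ V : Submodule ℝ (Fin n → ℝ), (∀ v ∈ V, v ≠ 0 → 0 < v ⬝ᵥ (A *ᵥ v)) ∧
      finrank ℝ V = {i | 0 < hA.eigenvalues i}.ncard := by
  set U := (hA.eigenvectorUnitary : Matrix (Fin n) (Fin n) ℝ)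
  set S : Set (Fin n) := {i | 0 < hA.eigenvalues i}
  refine ⟨Submodule.map (mulVecLin U) (suppSub S), ?_, ?_⟩
  · rintro v ⟨w, hw, rfl⟩ hv
    simp only [mulVecLin_apply] at hv ⊢
    rw [quad_form_eigen hA w]
    have hw0 : w ≠ 0 := by rintro rfl; simp at hv
    obtain ⟨i, hi⟩ := Function.ne_iff.mp hw0
    have hiS : i ∈ S := by
      by_contra h; exact hi (suppSub_apply_eq_zero hw h)
    refine Finset.sum_pos' (fun j _ => ?_) ⟨i, Finset.mem_univ i, ?_⟩
    · by_cases hj : j ∈ S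
      · exact mul_nonneg (le_of_lt hj) (sq_nonneg _)
      · rw [suppSub_apply_eq_zero hw hj]; simp
    · exact mul_pos hiS (by simpa using sq_pos_of_ne_zero hi)
  · rw [← suppSub_finrank S]
    exact (Submodule.equivMapOfInjective _ (unitary_mulVecLin_injective hA) _).symm.finrank_eq

private lemma posOn_finrank_le {A : Matrix (Fin n) (Fin n) ℝ} (hA : A.IsHermitian)
    (V : Submodule ℝ (Fin n → ℝ))
    (hV : ∀ v ∈ V, v ≠ 0 → 0 < v ⬝ᵥ (A *ᵥ v)) :
    finrank ℝ V ≤ {i | 0 < hA.eigenvalues i}.ncard := by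
  set U := (hA.eigenvectorUnitary : Matrix (Fin n) (Fin n) ℝ)
  set S : Set (Fin n) := {i | 0 < hA.eigenvalues i}
  set W := Submodule.map (mulVecLin U) (suppSub Sᶜ) with hWdef
  have hWrank : finrank ℝ W = Sᶜ.ncard := by
    rw [← suppSub_finrank Sᶜ]
    exact (Submodule.equivMapOfInjective _ (unitary_mulVecLin_injective hA) _).symm.finrank_eq
  have hWneg : ∀ v ∈ W, v ⬝ᵥ (A *ᵥ v) ≤ 0 := by
    rintro v ⟨w, hw, rfl⟩
    simp only [mulVecLin_apply]
    rw [quad_form_eigen hA w]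
    refine Finset.sum_nonpos fun j _ => ?_
    by_cases hj : j ∈ S
    · rw [suppSub_apply_eq_zero hw (by simpa using hj)]; simp
    · exact mul_nonpos_of_nonpos_of_nonneg (not_lt.mp hj) (sq_nonneg _)
  by_contra hlt
  push_neg at hlt
  have hcompl : S.ncard + Sᶜ.ncard = n := by
    rw [Set.ncard_add_ncard_compl]; simp [Nat.card_eq_fintype_card]
  have hsum : n < finrank ℝ V + finrank ℝ W := by omega
  have hle : finrank ℝ ↥(V ⊔ W) ≤ n := by
    simpa using Submodule.finrank_le (V ⊔ W)
  have heq := Submodule.finrank_sup_add_finrank_inf_eq V W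
  have hpos : 0 < finrank ℝ ↥(V ⊓ W) := by omega
  have hne : V ⊓ W ≠ ⊥ := by
    intro h; rw [h] at hpos; simp at hpos
  obtain ⟨v, hv, hv0⟩ := Submodule.exists_mem_ne_zero_of_ne_bot hne
  exact absurd (hV v hv.1 hv0) (not_lt.mpr (hWneg v hv.2))

private lemma posCount_le_of_congr {A B C : Matrix (Fin n) (Fin n) ℝ} (hA : A.IsHermitian)
    (hB : B.IsHermitian) (hC : IsUnit C.det) (h : B = Cᵀ * A * C) :
    {i | 0 < hA.eigenvalues i}.ncard ≤ {i | 0 < hB.eigenvalues i}.ncard := by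
  obtain ⟨V, hVpos, hVrank⟩ := exists_posOn hA
  have hinj : Function.Injective (mulVecLin C⁻¹) := by
    intro a b hab
    have := congrArg (fun z => C *ᵥ z) hab
    simpa [mulVec_mulVec, Matrix.mul_nonsing_inv _ hC] using this
  set V' := Submodule.map (mulVecLin C⁻¹) V with hV'
  have hrank' : finrank ℝ V' = finrank ℝ V :=
    ((Submodule.equivMapOfInjective _ hinj _).symm.finrank_eq)
  have hpos' : ∀ v ∈ V', v ≠ 0 → 0 < v ⬝ᵥ (B *ᵥ v) := by
    rintro v' ⟨v, hv, rfl⟩ hv0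
    simp only [mulVecLin_apply] at hv0 ⊢
    have hCv : C *ᵥ (C⁻¹ *ᵥ v) = v := by
      rw [mulVec_mulVec, Matrix.mul_nonsing_inv _ hC, one_mulVec]
    have hq : (C⁻¹ *ᵥ v) ⬝ᵥ (B *ᵥ (C⁻¹ *ᵥ v)) = v ⬝ᵥ (A *ᵥ v) := by
      rw [h]
      rw [← mulVec_mulVec, ← mulVec_mulVec, dotProduct_mulVec, vecMul_transpose, hCv]
    rw [hq]
    refine hVpos v hv fun h0 => hv0 ?_
    rw [h0]; simp
  calc {i | 0 < hA.eigenvalues i}.ncard = finrank ℝ V' := by rw [hrank', hVrank]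
    _ ≤ _ := posOn_finrank_le hB V' hpos'

private lemma posCount_congr {A B C : Matrix (Fin n) (Fin n) ℝ} (hA : A.IsHermitian)
    (hB : B.IsHermitian) (hC : IsUnit C.det) (h : B = Cᵀ * A * C) :
    {i | 0 < hB.eigenvalues i}.ncard = {i | 0 < hA.eigenvalues i}.ncard := by
  refine le_antisymm ?_ (posCount_le_of_congr hA hB hC h)
  refine posCount_le_of_congr hB hA (isUnit_nonsing_inv_det _ hC) ?_
  rw [h, transpose_nonsing_inv]
  rw [← Matrix.mul_assoc, ← Matrix.mul_assoc, Matrix.nonsing_inv_mul _ (by rwa [det_transpose])]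
  rw [Matrix.one_mul, Matrix.mul_assoc, Matrix.mul_nonsing_inv _ hC, Matrix.mul_one]

private lemma zeroCount_congr {A B C : Matrix (Fin n) (Fin n) ℝ} (hA : A.IsHermitian)
    (hB : B.IsHermitian) (hC : IsUnit C.det) (h : B = Cᵀ * A * C) :
    {i | hB.eigenvalues i = 0}.ncard = {i | hA.eigenvalues i = 0}.ncard := by
  classical
  have hrank : B.rank = A.rank := by
    rw [h, rank_mul_eq_left_of_isUnit_det _ _ hC,
      rank_mul_eq_right_of_isUnit_det _ _ (by rwa [det_transpose])]
  have key : ∀ (M : Matrix (Fin n) (Fin n) ℝ) (hM : M.IsHermitian),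
      {i | hM.eigenvalues i = 0}.ncard = n - M.rank := by
    intro M hM
    rw [hM.rank_eq_card_non_zero_eigs]
    rw [Set.ncard_eq_toFinset_card', Set.toFinset_card]
    have h2 := Fintype.card_subtype_compl (fun i => hM.eigenvalues i ≠ 0)
    simp only [not_ne_iff] at h2
    simpa [Fintype.card_subtype] using h2
  rw [key A hA, key B hB, hrank]

private lemma triCount (e : Fin n → ℝ) :
    {i | 0 < e i}.ncard + {i | e i = 0}.ncard + {i | e i < 0}.ncard = n := by
  classical
  rw [Set.ncard_eq_toFinset_card', Set.ncard_eq_toFinset_card', Set.ncard_eq_toFinset_card']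
  simp only [Set.toFinset_setOf]
  have h1 := Finset.card_filter_add_card_filter_not
    (s := (Finset.univ : Finset (Fin n))) (p := fun i => 0 < e i)
  have h2 : Finset.univ.filter (fun i => ¬ 0 < e i)
      = Finset.univ.filter (fun i => e i = 0) ∪ Finset.univ.filter (fun i => e i < 0) := by
    ext i
    simp only [Finset.mem_filter, Finset.mem_union, Finset.mem_univ, true_and, not_lt]
    constructor
    · intro hi
      rcases lt_or_eq_of_le hi with h | h
      · exact Or.inr h
      · exact Or.inl h
    · rintro (h | h) <;> simp [h, le_of_lt]
  have h3 : Disjoint (Finset.univ.filter (fun i => e i = 0))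
      (Finset.univ.filter (fun i => e i < 0)) := by
    rw [Finset.disjoint_filter]
    intro i _ hi
    simp [hi]
  rw [h2, Finset.card_union_of_disjoint h3] at h1
  simp only [Finset.card_univ, Fintype.card_fin] at h1
  omega

private lemma negCount_congr {A B C : Matrix (Fin n) (Fin n) ℝ} (hA : A.IsHermitian)
    (hB : B.IsHermitian) (hC : IsUnit C.det) (h : B = Cᵀ * A * C) :
    {i | hB.eigenvalues i < 0}.ncard = {i | hA.eigenvalues i < 0}.ncard := by
  have t1 := triCount hA.eigenvalues
  have t2 := triCount hB.eigenvalues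
  have e1 := posCount_congr hA hB hC h
  have e2 := zeroCount_congr hA hB hC h
  omega

end Aux

/-- The Kwong matrix: (i,j) entry is `(p i ^ r + p j ^ r) / (p i + p j)`. -/
noncomputable def kwong {n : ℕ} (p : Fin n → ℝ) (r : ℝ) : Matrix (Fin n) (Fin n) ℝ :=
  Matrix.of fun i j => (p i ^ r + p j ^ r) / (p i + p j)

lemma kwong_isHermitian {n : ℕ} (p : Fin n → ℝ) (r : ℝ) : (kwong p r).IsHermitian := by
  ext i j
  simp only [kwong, Matrix.conjTranspose_apply, Matrix.of_apply, star_trivial]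
  rw [add_comm (p j ^ r), add_comm (p j)]

/-- The inertia of a real symmetric matrix: the numbers of positive, zero and
negative eigenvalues, counted with multiplicity. -/
noncomputable def inertia {n : ℕ} (A : Matrix (Fin n) (Fin n) ℝ) (hA : A.IsHermitian) :
    ℕ × ℕ × ℕ :=
  ({i | 0 < hA.eigenvalues i}.ncard, {i | hA.eigenvalues i = 0}.ncard,
    {i | hA.eigenvalues i < 0}.ncard)

lemma coshRatio_isHermitian {n : ℕ} (x : Fin n → ℝ) (r : ℝ) :
    (Matrix.of fun i j : Fin n =>
      Real.cosh (r * (x i - x j)) / Real.cosh (x i - x j)).IsHermitian := by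
  ext i j
  simp only [Matrix.conjTranspose_apply, Matrix.of_apply, star_trivial]
  rw [show x j - x i = -(x i - x j) by ring, show r * -(x i - x j) = -(r * (x i - x j)) by
    ring, Real.cosh_neg, Real.cosh_neg]

/-- with `p i = exp (2 x i)`, one has `Kᵣ = Δ K̃ᵣ Δ` where
`Δ = diag(e^{(r-1)x i})` and `K̃ᵣ = [cosh r(x i - x j) / cosh (x i - x j)]`;
consequently `In Kᵣ = In K̃ᵣ`. -/
theorem kwong_cosh_congruence {n : ℕ} (x : Fin n → ℝ) (hx : Function.Injective x)
    (r : ℝ) (p : Fin n → ℝ) (hp : ∀ i, p i = Real.exp (2 * x i)) :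
    kwong p r =
      Matrix.diagonal (fun i => Real.exp ((r - 1) * x i)) *
        (Matrix.of fun i j : Fin n =>
          Real.cosh (r * (x i - x j)) / Real.cosh (x i - x j)) *
        Matrix.diagonal (fun i => Real.exp ((r - 1) * x i)) ∧
    inertia (kwong p r) (kwong_isHermitian p r) =
      inertia (Matrix.of fun i j : Fin n =>
          Real.cosh (r * (x i - x j)) / Real.cosh (x i - x j))
        (coshRatio_isHermitian x r) := by
  have hmat : kwong p r =
      Matrix.diagonal (fun i => Real.exp ((r - 1) * x i)) *
        (Matrix.of fun i j : Fin n =>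
          Real.cosh (r * (x i - x j)) / Real.cosh (x i - x j)) *
        Matrix.diagonal (fun i => Real.exp ((r - 1) * x i)) := by
    ext i j
    rw [Matrix.mul_diagonal, Matrix.diagonal_mul]
    simp only [kwong, Matrix.of_apply, hp]
    rw [show Real.exp ((r - 1) * x i) *
        (Real.cosh (r * (x i - x j)) / Real.cosh (x i - x j)) * Real.exp ((r - 1) * x j)
      = Real.exp ((r - 1) * x i) * (Real.cosh (r * (x i - x j)) / Real.cosh (x i - x j)) *
        Real.exp ((r - 1) * x j) from rfl]
    exact scalar_key (x i) (x j) r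
  refine ⟨hmat, ?_⟩
  have hC : IsUnit (Matrix.diagonal (fun i => Real.exp ((r - 1) * x i))).det := by
    rw [Matrix.det_diagonal]
    exact isUnit_iff_ne_zero.mpr (by positivity)
  have hmat' : kwong p r =
      (Matrix.diagonal (fun i => Real.exp ((r - 1) * x i)))ᵀ *
        (Matrix.of fun i j : Fin n =>
          Real.cosh (r * (x i - x j)) / Real.cosh (x i - x j)) *
        Matrix.diagonal (fun i => Real.exp ((r - 1) * x i)) := by
    rw [Matrix.diagonal_transpose]; exact hmat
  unfold inertia
  refine Prod.ext ?_ (Prod.ext ?_ ?_)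
  · exact posCount_congr (coshRatio_isHermitian x r) (kwong_isHermitian p r) hC hmat'
  · exact zeroCount_congr (coshRatio_isHermitian x r) (kwong_isHermitian p r) hC hmat'
  · exact negCount_congr (coshRatio_isHermitian x r) (kwong_isHermitian p r) hC hmat'
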